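/- Let A, B be matrices with A ∈ ℝ^{n×n} and B ∈ ℝ^{n×1}, and let Ã ∈ ℝ^{n×n}. If both pairs (A,B) and (Ã,B) satisfy the Kalman rank condition (i.e., are controllable), then there exists a unique pair (T,K) with T ∈ ℝ^{n×n} invertible and K ∈ ℝ^{1×n} such that T·A + B·K = Ã·T and T·B = B. -/
import Mathlib

open Matrix

/-- The Kalman controllability matrix `[B, AB, ..., A^{n-1}B]`. -/
def kalmanMatrix {n : ℕ} (A : Matrix (Fin n) (Fin n) ℝ) (B : Matrix (Fin n) (Fin 1) ℝ) :
    Matrix (Fin n) (Fin n) ℝ :=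
  Matrix.of fun i j => (A ^ (j : ℕ) * B) i 0

/-- A pair `(A, B)` is controllable if its Kalman matrix has full rank. -/
def IsControllable {n : ℕ} (A : Matrix (Fin n) (Fin n) ℝ) (B : Matrix (Fin n) (Fin 1) ℝ) : Prop :=
  (kalmanMatrix A B).rank = n

namespace Stmt0Aux

lemma isUnit_of_rank_eq {n : ℕ} (M : Matrix (Fin n) (Fin n) ℝ) (h : M.rank = n) : IsUnit M := by
  rw [← Matrix.mulVec_surjective_iff_isUnit]
  have htop : LinearMap.range M.mulVecLin = ⊤ := by
    apply Submodule.eq_top_of_finrank_eq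
    rw [Matrix.rank] at h
    rw [h, Module.finrank_fin_fun]
  intro y
  obtain ⟨x, hx⟩ := htop ▸ Submodule.mem_top (x := y) (R := ℝ)
  exact ⟨x, hx⟩


variable {n : ℕ}

/-- first standard basis column -/
def E0 (n : ℕ) : Matrix (Fin n) (Fin 1) ℝ := Matrix.of fun i _ => if (i : ℕ) = 0 then 1 else 0

/-- strictly upper triangular Toeplitz-type matrix built from coefficients l -/
def Nmat (n : ℕ) (l : ℕ → ℝ) : Matrix (Fin n) (Fin n) ℝ :=
  Matrix.of fun i j => if (i : ℕ) < (j : ℕ) then -(l ((j : ℕ) - 1 - (i : ℕ))) else 0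

def Smat (n : ℕ) (l : ℕ → ℝ) : Matrix (Fin n) (Fin n) ℝ := 1 + Nmat n l

def Lmat (n : ℕ) (l : ℕ → ℝ) : Matrix (Fin 1) (Fin n) ℝ := Matrix.of fun _ j => l (j : ℕ)

/-- the matrix has shift structure in all columns but the last -/
def Shifty (G : Matrix (Fin n) (Fin n) ℝ) : Prop :=
  ∀ i j : Fin n, (j : ℕ) + 1 < n → G i j = if (i : ℕ) = (j : ℕ) + 1 then 1 else 0

lemma mulF {F : Matrix (Fin n) (Fin n) ℝ} (hF : Shifty F) (M : Matrix (Fin n) (Fin n) ℝ)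
    (i j : Fin n) (hj : (j : ℕ) + 1 < n) : (M * F) i j = M i ⟨(j : ℕ) + 1, hj⟩ := by
  rw [Matrix.mul_apply]
  rw [Finset.sum_eq_single (⟨(j : ℕ) + 1, hj⟩ : Fin n)]
  · rw [hF _ _ hj]; simp
  · intro k _ hk
    rw [hF _ _ hj]
    have : ¬ ((k : ℕ) = (j : ℕ) + 1) := by
      intro h; exact hk (Fin.ext h)
    rw [if_neg this, mul_zero]
  · intro h; exact absurd (Finset.mem_univ _) h

lemma Gmul {G : Matrix (Fin n) (Fin n) ℝ} (hG : Shifty G) (M : Matrix (Fin n) (Fin n) ℝ)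
    (hM : ∀ k j : Fin n, (j : ℕ) ≤ (k : ℕ) → M k j = 0) (i j : Fin n) :
    (G * M) i j = if h : 1 ≤ (i : ℕ) then M ⟨(i : ℕ) - 1, by omega⟩ j else 0 := by
  rw [Matrix.mul_apply]
  split_ifs with hi
  · rw [Finset.sum_eq_single (⟨(i : ℕ) - 1, by omega⟩ : Fin n)]
    · by_cases hk : ((⟨(i : ℕ) - 1, by omega⟩ : Fin n) : ℕ) < (j : ℕ)
      · have hlt : ((⟨(i : ℕ) - 1, by omega⟩ : Fin n) : ℕ) + 1 < n := by
          simp only []; omega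
        rw [hG _ _ hlt]
        simp only [Fin.val_mk]
        rw [if_pos (by omega), one_mul]
      · rw [hM _ _ (by omega)]; simp
    · intro k _ hk
      by_cases hkj : (k : ℕ) < (j : ℕ)
      · have hlt : (k : ℕ) + 1 < n := by omega
        rw [hG _ _ hlt]
        have : ¬ ((i : ℕ) = (k : ℕ) + 1) := by
          intro h; apply hk; apply Fin.ext; simp; omega
        rw [if_neg this, zero_mul]
      · rw [hM _ _ (by omega), mul_zero]
    · intro h; exact absurd (Finset.mem_univ _) h
  · apply Finset.sum_eq_zero
    intro k _
    by_cases hkj : (k : ℕ) < (j : ℕ)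
    · have hlt : (k : ℕ) + 1 < n := by omega
      rw [hG _ _ hlt, if_neg (by omega), zero_mul]
    · rw [hM _ _ (by omega), mul_zero]

lemma Nmat_triu (l : ℕ → ℝ) : ∀ k j : Fin n, (j : ℕ) ≤ (k : ℕ) → Nmat n l k j = 0 := by
  intro k j h
  simp only [Nmat, Matrix.of_apply]
  rw [if_neg (by omega)]

lemma E0_mul_apply (L : Matrix (Fin 1) (Fin n) ℝ) (i : Fin n) (j : Fin n) :
    (E0 n * L) i j = if (i : ℕ) = 0 then L 0 j else 0 := by
  rw [Matrix.mul_apply, Fin.sum_univ_one]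
  simp only [E0, Matrix.of_apply]
  split_ifs <;> simp

lemma keyN {F G : Matrix (Fin n) (Fin n) ℝ} (hF : Shifty F) (hG : Shifty G) (l : ℕ → ℝ)
    (i j : Fin n) (hj : (j : ℕ) + 1 < n) :
    (Nmat n l * F) i j + (E0 n * Lmat n l) i j = (G * Nmat n l) i j := by
  rw [mulF hF, E0_mul_apply, Gmul hG _ (Nmat_triu l)]
  simp only [Nmat, Lmat, Matrix.of_apply, Fin.val_mk]
  split_ifs
  all_goals first
    | omega
    | ring1
    | ((have h9 : (j : ℕ) + 1 - 1 - (i : ℕ) = (j : ℕ) - 1 - ((i : ℕ) - 1) := by omega); rw [h9]; ring1)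
    | ((have h9 : (j : ℕ) + 1 - 1 - (i : ℕ) = (j : ℕ) := by omega); rw [h9]; ring1)


lemma keyS {F G : Matrix (Fin n) (Fin n) ℝ} (hF : Shifty F) (hG : Shifty G) (l : ℕ → ℝ)
    (i j : Fin n) (hj : (j : ℕ) + 1 < n) :
    (Smat n l * F) i j + (E0 n * Lmat n l) i j = (G * Smat n l) i j := by
  simp only [Smat, add_mul, mul_add, one_mul, mul_one, Matrix.add_apply]
  have h1 := keyN hF hG l i j hj
  have h2 : F i j = G i j := by rw [hF _ _ hj, hG _ _ hj]
  linarith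

lemma mul_E0 (hn : 0 < n) (M : Matrix (Fin n) (Fin n) ℝ) (i : Fin n) (j : Fin 1) :
    (M * E0 n) i j = M i ⟨0, hn⟩ := by
  rw [Matrix.mul_apply]
  rw [Finset.sum_eq_single (⟨0, hn⟩ : Fin n)]
  · simp [E0]
  · intro k _ hk
    simp only [E0, Matrix.of_apply]
    rw [if_neg (fun h => hk (Fin.ext h)), mul_zero]
  · intro h; exact absurd (Finset.mem_univ _) h

lemma Smat_mul_E0 (hn : 0 < n) (l : ℕ → ℝ) : Smat n l * E0 n = E0 n := by
  ext i j
  rw [mul_E0 hn]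
  simp only [Smat, Matrix.add_apply, Matrix.one_apply, Nmat, E0, Matrix.of_apply, Fin.val_mk]
  by_cases h : (i : ℕ) = 0
  · rw [if_pos (Fin.ext h), if_neg (by omega), if_pos h]; ring
  · rw [if_neg (fun hh => h (by rw [hh])), if_neg (by omega), if_neg h]; ring

def lastIdx (hn : 0 < n) : Fin n := ⟨n - 1, by omega⟩

def Phi (F G : Matrix (Fin n) (Fin n) ℝ) (hn : 0 < n) (l : ℕ → ℝ) : Fin n → ℝ :=
  fun i => (G * Nmat n l) i (lastIdx hn) - (Nmat n l * F) i (lastIdx hn)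
    - (E0 n * Lmat n l) i (lastIdx hn)

def ext0 (n : ℕ) (v : Fin n → ℝ) : ℕ → ℝ := fun m => if h : m < n then v ⟨m, h⟩ else 0

lemma Nmat_add (l1 l2 : ℕ → ℝ) :
    Nmat n (fun m => l1 m + l2 m) = Nmat n l1 + Nmat n l2 := by
  ext i j
  simp only [Nmat, Matrix.of_apply, Matrix.add_apply]
  split_ifs <;> ring

lemma Nmat_smul (c : ℝ) (l : ℕ → ℝ) :
    Nmat n (fun m => c * l m) = c • Nmat n l := by
  ext i j
  simp only [Nmat, Matrix.of_apply, Matrix.smul_apply, smul_eq_mul]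
  split_ifs <;> ring

lemma Lmat_add (l1 l2 : ℕ → ℝ) :
    Lmat n (fun m => l1 m + l2 m) = Lmat n l1 + Lmat n l2 := by
  ext i j; simp [Lmat]

lemma Lmat_smul (c : ℝ) (l : ℕ → ℝ) :
    Lmat n (fun m => c * l m) = c • Lmat n l := by
  ext i j; simp [Lmat]

lemma ext0_add (u v : Fin n → ℝ) :
    ext0 n (u + v) = fun m => ext0 n u m + ext0 n v m := by
  funext m
  simp only [ext0]
  split_ifs <;> simp

lemma ext0_smul (c : ℝ) (v : Fin n → ℝ) :
    ext0 n (c • v) = fun m => c * ext0 n v m := by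
  funext m
  simp only [ext0]
  split_ifs <;> simp

def PhiL (F G : Matrix (Fin n) (Fin n) ℝ) (hn : 0 < n) : (Fin n → ℝ) →ₗ[ℝ] (Fin n → ℝ) where
  toFun v := Phi F G hn (ext0 n v)
  map_add' u v := by
    funext i
    simp only [Phi, ext0_add, Nmat_add, Lmat_add, Matrix.mul_add, Matrix.add_mul,
      Matrix.add_apply, Pi.add_apply]
    ring
  map_smul' c v := by
    funext i
    simp only [Phi, ext0_smul, Nmat_smul, Lmat_smul, Matrix.mul_smul, Matrix.smul_mul,
      Matrix.smul_apply, Pi.smul_apply, smul_eq_mul, RingHom.id_apply]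
    ring


lemma phiL_inj {F G : Matrix (Fin n) (Fin n) ℝ} (hn : 0 < n) (hF : Shifty F) (hG : Shifty G)
    (v : Fin n → ℝ) (hv : PhiL F G hn v = 0) : v = 0 := by
  set l := ext0 n v with hl
  have hPhi : ∀ i : Fin n, Phi F G hn l i = 0 := fun i => congrFun hv i
  have main : ∀ t, t < n - 1 → l t = 0 := by
    intro t
    induction t using Nat.strong_induction_on with
    | _ t IH =>
      intro ht
      have hi : n - 1 - t < n := by omega
      have h := hPhi ⟨n - 1 - t, hi⟩
      simp only [Phi] at h
      rw [Gmul hG _ (Nmat_triu l)] at h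
      rw [dif_pos (show 1 ≤ ((⟨n - 1 - t, hi⟩ : Fin n) : ℕ) by simp; omega)] at h
      rw [E0_mul_apply, if_neg (show ¬ ((⟨n - 1 - t, hi⟩ : Fin n) : ℕ) = 0 by simp; omega)] at h
      have hsum : (Nmat n l * F) ⟨n - 1 - t, hi⟩ (lastIdx hn) = 0 := by
        rw [Matrix.mul_apply]
        apply Finset.sum_eq_zero
        intro k _
        by_cases hk : (n - 1 - t : ℕ) < (k : ℕ)
        · have hz : l ((k : ℕ) - 1 - (n - 1 - t)) = 0 := IH _ (by omega) (by omega)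
          simp only [Nmat, Matrix.of_apply, Fin.val_mk]
          rw [if_pos hk, hz]
          ring
        · simp only [Nmat, Matrix.of_apply, Fin.val_mk]
          rw [if_neg hk, zero_mul]
      rw [hsum] at h
      simp only [Nmat, Matrix.of_apply, Fin.val_mk, lastIdx] at h
      rw [if_pos (show n - 1 - t - 1 < n - 1 by omega)] at h
      rw [show n - 1 - 1 - (n - 1 - t - 1) = t by omega] at h
      linarith
  have hlast : l (n - 1) = 0 := by
    have h := hPhi ⟨0, hn⟩
    simp only [Phi] at h
    rw [Gmul hG _ (Nmat_triu l)] at h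
    rw [dif_neg (by simp)] at h
    rw [E0_mul_apply, if_pos rfl] at h
    have hsum : (Nmat n l * F) ⟨0, hn⟩ (lastIdx hn) = 0 := by
      rw [Matrix.mul_apply]
      apply Finset.sum_eq_zero
      intro k _
      by_cases hk : (0 : ℕ) < (k : ℕ)
      · have hz : l ((k : ℕ) - 1 - 0) = 0 := main _ (by omega)
        simp only [Nmat, Matrix.of_apply, Fin.val_mk]
        rw [if_pos hk, hz]
        ring
      · simp only [Nmat, Matrix.of_apply, Fin.val_mk]
        rw [if_neg hk, zero_mul]
    rw [hsum] at h
    simp only [Lmat, Matrix.of_apply, lastIdx, Fin.val_mk] at h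
    linarith
  funext i
  have hli : l (i : ℕ) = 0 := by
    rcases lt_or_ge (i : ℕ) (n - 1) with h | h
    · exact main _ h
    · rw [show (i : ℕ) = n - 1 by omega]
      exact hlast
  rw [hl] at hli
  simp only [ext0, dif_pos i.isLt, Fin.eta] at hli
  simpa using hli


lemma diff_zero {F G : Matrix (Fin n) (Fin n) ℝ} (hn : 0 < n) (hF : Shifty F) (hG : Shifty G)
    (D : Matrix (Fin n) (Fin n) ℝ) (M : Matrix (Fin 1) (Fin n) ℝ)
    (h1 : D * F + E0 n * M = G * D) (h2 : D * E0 n = 0) : D = 0 ∧ M = 0 := by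
  set v : Fin n → ℝ := fun j => M 0 j with hv
  set l := ext0 n v with hl
  have hlv : ∀ j : Fin n, l (j : ℕ) = M 0 j := by
    intro j
    simp only [hl, ext0, dif_pos j.isLt, Fin.eta, hv]
  have hD : ∀ (jv : ℕ) (hjv : jv < n), ∀ i, D i ⟨jv, hjv⟩ = Nmat n l i ⟨jv, hjv⟩ := by
    intro jv
    induction jv using Nat.strong_induction_on with
    | _ jv IH =>
      intro hjv i
      cases jv with
      | zero =>
        have h0 : D i ⟨0, hn⟩ = 0 := by
          rw [← mul_E0 hn D i 0, h2]
          simp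
        have : D i ⟨0, hjv⟩ = 0 := h0
        rw [this]
        simp only [Nmat, Matrix.of_apply, Fin.val_mk]
        rw [if_neg (by omega)]
      | succ j =>
        have hjn : j < n := by omega
        have hj1 : ((⟨j, hjn⟩ : Fin n) : ℕ) + 1 < n := by simpa using hjv
        have e1 : (D * F + E0 n * M) i ⟨j, hjn⟩ = (G * D) i ⟨j, hjn⟩ := by rw [h1]
        rw [Matrix.add_apply, mulF hF D i ⟨j, hjn⟩ hj1, E0_mul_apply] at e1
        have eGD : (G * D) i ⟨j, hjn⟩ = (G * Nmat n l) i ⟨j, hjn⟩ := by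
          rw [Matrix.mul_apply, Matrix.mul_apply]
          apply Finset.sum_congr rfl
          intro k _
          rw [IH j (by omega) hjn k]
        rw [eGD] at e1
        have e2 := keyN (F := F) (G := G) hF hG l i ⟨j, hjn⟩ hj1
        rw [mulF hF _ i ⟨j, hjn⟩ hj1, E0_mul_apply] at e2
        have hLl : Lmat n l 0 ⟨j, hjn⟩ = M 0 ⟨j, hjn⟩ := by
          simp only [Lmat, Matrix.of_apply]
          exact hlv ⟨j, hjn⟩
        rw [hLl] at e2
        have : D i ⟨(⟨j, hjn⟩ : Fin n) + 1, hj1⟩ = Nmat n l i ⟨(⟨j, hjn⟩ : Fin n) + 1, hj1⟩ := by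
          linarith
        exact this
  have hDN : D = Nmat n l := by
    ext i j
    have := hD j.val j.isLt i
    simpa [Fin.eta] using this
  rw [hDN] at h1
  have hphi : PhiL F G hn v = 0 := by
    funext i
    show Phi F G hn (ext0 n v) i = 0
    have e1 : (Nmat n l * F + E0 n * M) i (lastIdx hn) = (G * Nmat n l) i (lastIdx hn) := by
      rw [h1]
    rw [Matrix.add_apply, E0_mul_apply] at e1
    simp only [Phi, ← hl]
    rw [E0_mul_apply]
    have hLl : Lmat n l 0 (lastIdx hn) = M 0 (lastIdx hn) := by
      simp only [Lmat, Matrix.of_apply]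
      exact hlv (lastIdx hn)
    rw [hLl]
    linarith
  have hv0 : v = 0 := phiL_inj hn hF hG v hphi
  have hM : M = 0 := by
    ext x j
    have hx : x = 0 := Subsingleton.elim _ _
    rw [hx]
    have : M 0 j = v j := rfl
    rw [this, hv0]
    rfl
  refine ⟨?_, hM⟩
  rw [hDN]
  ext i j
  simp only [Nmat, Matrix.of_apply, hl, ext0, hv0, Matrix.zero_apply]
  split_ifs <;> simp


lemma core (hn : 0 < n) (F G : Matrix (Fin n) (Fin n) ℝ) (hF : Shifty F) (hG : Shifty G) :
    ∃! SL : Matrix (Fin n) (Fin n) ℝ × Matrix (Fin 1) (Fin n) ℝ,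
      IsUnit SL.1 ∧ SL.1 * F + E0 n * SL.2 = G * SL.1 ∧ SL.1 * E0 n = E0 n := by
  have hinj : Function.Injective (PhiL F G hn) :=
    (injective_iff_map_eq_zero _).mpr (phiL_inj hn hF hG)
  have hsurj := LinearMap.injective_iff_surjective.mp hinj
  obtain ⟨v0, hv0⟩ := hsurj (fun i => F i (lastIdx hn) - G i (lastIdx hn))
  set l0 := ext0 n v0 with hl0
  have hPhi0 : ∀ i, Phi F G hn l0 i = F i (lastIdx hn) - G i (lastIdx hn) :=
    fun i => congrFun hv0 i
  have hEq : Smat n l0 * F + E0 n * Lmat n l0 = G * Smat n l0 := by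
    ext i j
    by_cases hj : (j : ℕ) + 1 < n
    · rw [Matrix.add_apply]
      exact keyS hF hG l0 i j hj
    · have hjl : j = lastIdx hn := Fin.ext (by simp only [lastIdx]; omega)
      subst hjl
      have h := hPhi0 i
      simp only [Phi] at h
      simp only [Smat, add_mul, mul_add, one_mul, mul_one, Matrix.add_apply]
      linarith
  have hunit : IsUnit (Smat n l0) := by
    rw [Matrix.isUnit_iff_isUnit_det]
    have htri : (Smat n l0).BlockTriangular id := by
      intro i j hij
      simp only [Smat, Matrix.add_apply, Matrix.one_apply, Nmat, Matrix.of_apply]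
      have hij' : (j : ℕ) < (i : ℕ) := hij
      rw [if_neg (by intro h; rw [h] at hij'; omega), if_neg (by omega)]
      ring
    rw [Matrix.det_of_upperTriangular htri]
    have : ∀ i ∈ Finset.univ, Smat n l0 i i = (1 : ℝ) := by
      intro i _
      simp only [Smat, Matrix.add_apply, Matrix.one_apply_eq, Nmat, Matrix.of_apply]
      rw [if_neg (by omega)]
      ring
    rw [Finset.prod_congr rfl this]
    simp
  refine ⟨(Smat n l0, Lmat n l0), ⟨hunit, hEq, Smat_mul_E0 hn l0⟩, ?_⟩
  rintro ⟨S', L'⟩ ⟨hu', heq', he0'⟩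
  have hd1 : (S' - Smat n l0) * F + E0 n * (L' - Lmat n l0) = G * (S' - Smat n l0) := by
    rw [Matrix.sub_mul, Matrix.mul_sub, Matrix.mul_sub, ← heq', ← hEq]
    abel
  have hd2 : (S' - Smat n l0) * E0 n = 0 := by
    rw [Matrix.sub_mul, he0', Smat_mul_E0 hn l0, sub_self]
  obtain ⟨hD0, hM0⟩ := diff_zero hn hF hG _ _ hd1 hd2
  have h1 : S' = Smat n l0 := by
    have := sub_eq_zero.mp hD0
    exact this
  have h2 : L' = Lmat n l0 := sub_eq_zero.mp hM0
  simp [h1, h2]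


lemma kalman_shift (A : Matrix (Fin n) (Fin n) ℝ) (B : Matrix (Fin n) (Fin 1) ℝ)
    (i j : Fin n) (hj : (j : ℕ) + 1 < n) :
    (A * kalmanMatrix A B) i j = kalmanMatrix A B i ⟨(j : ℕ) + 1, hj⟩ := by
  rw [Matrix.mul_apply]
  simp only [kalmanMatrix, Matrix.of_apply, Fin.val_mk]
  rw [show (A ^ ((j : ℕ) + 1) * B) = A * (A ^ (j : ℕ) * B) by rw [pow_succ', Matrix.mul_assoc]]
  rw [Matrix.mul_apply]

lemma shifty_conj (A : Matrix (Fin n) (Fin n) ℝ) (B : Matrix (Fin n) (Fin 1) ℝ)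
    (hC : IsUnit (kalmanMatrix A B).det) :
    Shifty ((kalmanMatrix A B)⁻¹ * (A * kalmanMatrix A B)) := by
  intro i j hj
  set C := kalmanMatrix A B with hCdef
  have : (C⁻¹ * (A * C)) i j = (C⁻¹ * C) i ⟨(j : ℕ) + 1, hj⟩ := by
    rw [Matrix.mul_apply, Matrix.mul_apply]
    apply Finset.sum_congr rfl
    intro k _
    rw [kalman_shift A B k j hj]
  rw [this, Matrix.nonsing_inv_mul _ hC, Matrix.one_apply]
  by_cases h : (i : ℕ) = (j : ℕ) + 1
  · rw [if_pos (Fin.ext h), if_pos h]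
  · rw [if_neg (fun hh => h (by rw [hh])), if_neg h]

lemma kalman_E0 (hn : 0 < n) (A : Matrix (Fin n) (Fin n) ℝ) (B : Matrix (Fin n) (Fin 1) ℝ) :
    kalmanMatrix A B * E0 n = B := by
  ext i j
  rw [mul_E0 hn]
  simp only [kalmanMatrix, Matrix.of_apply, Fin.val_mk]
  rw [pow_zero, Matrix.one_mul]
  congr 1
  exact Subsingleton.elim _ _

end Stmt0Aux


theorem stmt_0 {n : ℕ} (A Atil : Matrix (Fin n) (Fin n) ℝ) (B : Matrix (Fin n) (Fin 1) ℝ)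
    (hAB : IsControllable A B) (hAtilB : IsControllable Atil B) :
    ∃! TK : Matrix (Fin n) (Fin n) ℝ × Matrix (Fin 1) (Fin n) ℝ,
      IsUnit TK.1 ∧ TK.1 * A + B * TK.2 = Atil * TK.1 ∧ TK.1 * B = B := by
  open Stmt0Aux in
  rcases Nat.eq_zero_or_pos n with hn | hn
  · subst hn
    refine ⟨(1, 0), ⟨isUnit_one, ?_, ?_⟩, ?_⟩
    · apply Subsingleton.elim
    · apply Subsingleton.elim
    · rintro ⟨T, K⟩ -
      have hT : T = 1 := Subsingleton.elim _ _
      have hK : K = 0 := by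
        ext x j
        exact Fin.elim0 j
      simp [hT, hK]
  · have hC : IsUnit (kalmanMatrix A B) := isUnit_of_rank_eq _ hAB
    have hCt : IsUnit (kalmanMatrix Atil B) := isUnit_of_rank_eq _ hAtilB
    set C := kalmanMatrix A B with hCdef
    set Ct := kalmanMatrix Atil B with hCtdef
    have hCd : IsUnit C.det := (Matrix.isUnit_iff_isUnit_det C).mp hC
    have hCtd : IsUnit Ct.det := (Matrix.isUnit_iff_isUnit_det Ct).mp hCt
    set F := C⁻¹ * (A * C) with hF0
    set G := Ct⁻¹ * (Atil * Ct) with hG0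
    have hF : Shifty F := shifty_conj A B hCd
    have hG : Shifty G := shifty_conj Atil B hCtd
    have hBC : C * E0 n = B := kalman_E0 hn A B
    have hBCt : Ct * E0 n = B := kalman_E0 hn Atil B
    have hE0B : Ct⁻¹ * B = E0 n := by
      rw [← hBCt, Matrix.nonsing_inv_mul_cancel_left _ _ hCtd]
    have hE0BC : C⁻¹ * B = E0 n := by
      rw [← hBC, Matrix.nonsing_inv_mul_cancel_left _ _ hCd]
    have hCF : C * F = A * C := Matrix.mul_nonsing_inv_cancel_left _ _ hCd
    have hCtG : Ct * G = Atil * Ct := Matrix.mul_nonsing_inv_cancel_left _ _ hCtd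
    have hFCi : F * C⁻¹ = C⁻¹ * A := by
      rw [hF0, Matrix.mul_assoc, Matrix.mul_nonsing_inv_cancel_right _ _ hCd]
    obtain ⟨⟨S, L⟩, ⟨hSu, hSeq, hSE⟩, huniq⟩ := core hn F G hF hG
    have hCinv : IsUnit C⁻¹ := Matrix.isUnit_nonsing_inv_iff.mpr hC
    have hCtinv : IsUnit Ct⁻¹ := Matrix.isUnit_nonsing_inv_iff.mpr hCt
    refine ⟨(Ct * S * C⁻¹, L * C⁻¹), ⟨(hCt.mul hSu).mul hCinv, ?_, ?_⟩, ?_⟩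
    · -- T A + B K = Atil T
      have key := congrArg (fun X => Ct * X * C⁻¹) hSeq
      simp only [Matrix.add_mul, Matrix.mul_add, Matrix.mul_assoc] at key
      -- key : Ct * (S * (F * C⁻¹)) + Ct * (E0 n * (L * C⁻¹)) = Ct * (G * (S * C⁻¹))
      rw [hFCi] at key
      show Ct * S * C⁻¹ * A + B * (L * C⁻¹) = Atil * (Ct * S * C⁻¹)
      have hB' : B * (L * C⁻¹) = Ct * (E0 n * (L * C⁻¹)) := by
        rw [← hBCt, Matrix.mul_assoc]
      have hAt : Atil * (Ct * S * C⁻¹) = Ct * (G * (S * C⁻¹)) := by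
        simp only [← Matrix.mul_assoc]
        rw [hCtG]
      rw [hB', hAt]
      simp only [Matrix.mul_assoc]
      exact key
    · -- T B = B
      show Ct * S * C⁻¹ * B = B
      rw [Matrix.mul_assoc, hE0BC, Matrix.mul_assoc, hSE, hBCt]
    · rintro ⟨T', K'⟩ ⟨hu', heq', hb'⟩
      have hS'u : IsUnit (Ct⁻¹ * (T' * C)) := hCtinv.mul (hu'.mul hC)
      have hS'eq : (Ct⁻¹ * (T' * C)) * F + E0 n * (K' * C) = G * (Ct⁻¹ * (T' * C)) := by
        have key := congrArg (fun X => Ct⁻¹ * X * C) heq'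
        simp only [Matrix.add_mul, Matrix.mul_add, Matrix.mul_assoc] at key
        -- key : Ct⁻¹ * (T' * (A * C)) + Ct⁻¹ * (B * (K' * C)) = Ct⁻¹ * (Atil * (T' * C))
        have e1 : (Ct⁻¹ * (T' * C)) * F = Ct⁻¹ * (T' * (A * C)) := by
          rw [Matrix.mul_assoc, ← hCF]
          simp only [Matrix.mul_assoc, Matrix.nonsing_inv_mul_cancel_left _ _ hCd]
        have e2 : E0 n * (K' * C) = Ct⁻¹ * (B * (K' * C)) := by
          rw [← hE0B, Matrix.mul_assoc]
        have e3 : G * (Ct⁻¹ * (T' * C)) = Ct⁻¹ * (Atil * (T' * C)) := by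
          rw [hG0]
          simp only [Matrix.mul_assoc]
          rw [Matrix.mul_nonsing_inv_cancel_left _ _ hCtd]
        rw [e1, e2, e3, key]
      have hS'E0 : (Ct⁻¹ * (T' * C)) * E0 n = E0 n := by
        rw [Matrix.mul_assoc, Matrix.mul_assoc, hBC, hb', hE0B]
      have h := huniq (Ct⁻¹ * (T' * C), K' * C) ⟨hS'u, hS'eq, hS'E0⟩
      have hS : Ct⁻¹ * (T' * C) = S := congrArg Prod.fst h
      have hL : K' * C = L := congrArg Prod.snd h
      have hT' : T' = Ct * S * C⁻¹ := by
        rw [← hS, Matrix.mul_nonsing_inv_cancel_left _ _ hCtd,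
          Matrix.mul_nonsing_inv_cancel_right _ _ hCd]
      have hK' : K' = L * C⁻¹ := by
        rw [← hL, Matrix.mul_nonsing_inv_cancel_right _ _ hCd]
      rw [Prod.mk.injEq]
      exact ⟨hT', hK'⟩
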